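/- A matrix $A \in L$ lies in the $W$-Riordan group $R_W$ if and only if the bivariate generating function $\sum_n p_n(x) y^n/w_n \in \mathbb{F}[x][[y]]$ of its associated polynomial sequence equals $\alpha(y) W(x\beta(y))$ for some power series $\alpha, \beta \in \mathbb{F}[[y]]$ with $v(\alpha)=0$ and $v(\beta)=1$. -/

import Mathlib

open Polynomial

def memL {F : Type*} [Field F] (A : ℕ → ℕ → F) : Prop :=
  (∀ n k, n < k → A n k = 0) ∧ (∀ n, A n n ≠ 0)

noncomputable def colSeries {F : Type*} [Field F] (w : ℕ → F) (A : ℕ → ℕ → F)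
    (k : ℕ) : PowerSeries F :=
  PowerSeries.mk fun n => A n k / w n

/-- The defining quadratic relation of `W`-Riordan arrays:
`wₖ² Cₖ² = wₖ₋₁ Cₖ₋₁ ⬝ wₖ₊₁ Cₖ₊₁` for `k ≥ 1`. -/
def IsRiordan {F : Type*} [Field F] (w : ℕ → F) (A : ℕ → ℕ → F) : Prop :=
  ∀ k : ℕ, 1 ≤ k →
    (w k) ^ 2 • (colSeries w A k) ^ 2 =
      (w (k - 1) * w (k + 1)) • (colSeries w A (k - 1) * colSeries w A (k + 1))

/-- The polynomial sequence associated to a lower triangular matrix `A`: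
`pₙ(x) = ∑_{k ≤ n} a_{n,k} xᵏ`. -/
noncomputable def seqOfMat {F : Type*} [Field F] (A : ℕ → ℕ → F) (n : ℕ) : F[X] :=
  ∑ k ∈ Finset.range (n + 1), A n k • X ^ k

private lemma coeff_sum_smul {F : Type*} [Field F] (c : ℕ → F) (n j : ℕ) :
    (∑ k ∈ Finset.range (n + 1), c k • (X : F[X]) ^ k).coeff j =
      if j ≤ n then c j else 0 := by
  rw [Polynomial.finset_sum_coeff]
  simp [Polynomial.coeff_smul, Polynomial.coeff_X_pow, Finset.sum_ite_eq, Nat.lt_succ_iff]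

private lemma coeff_vanish {F : Type*} [Field F] (α β : PowerSeries F)
    (hβ : PowerSeries.coeff 0 β = 0) {k n : ℕ} (h : n < k) :
    PowerSeries.coeff n (α * β ^ k) = 0 := by
  have hXd : (PowerSeries.X : PowerSeries F) ∣ β :=
    PowerSeries.X_dvd_iff.2 (by simpa using hβ)
  have hx : (PowerSeries.X : PowerSeries F) ^ k ∣ α * β ^ k :=
    Dvd.dvd.mul_left (pow_dvd_pow_of_dvd hXd k) α
  exact PowerSeries.X_pow_dvd_iff.1 hx n h

private lemma coeff_one_mul' {F : Type*} [Field F] (α β : PowerSeries F) :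
    PowerSeries.coeff 1 (α * β) =
      PowerSeries.constantCoeff α * PowerSeries.coeff 1 β +
        PowerSeries.coeff 1 α * PowerSeries.constantCoeff β := by
  rw [PowerSeries.coeff_mul]
  simp [Finset.Nat.antidiagonal_succ, Finset.sum_pair, Prod.map,
    PowerSeries.coeff_zero_eq_constantCoeff]

private lemma bridge {F : Type*} [Field F] (w : ℕ → F) (hw : ∀ n, w n ≠ 0)
    (A : ℕ → ℕ → F) (hA : memL A) (α β : PowerSeries F)
    (hβ : PowerSeries.coeff 0 β = 0) :
    (∀ n, (w n)⁻¹ • seqOfMat A n =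
        ∑ k ∈ Finset.range (n + 1),
          (PowerSeries.coeff n (α * β ^ k) / w k) • (X : F[X]) ^ k) ↔
      (∀ k, w k • colSeries w A k = α * β ^ k) := by
  have hL : ∀ n : ℕ, (w n)⁻¹ • seqOfMat A n =
      ∑ k ∈ Finset.range (n + 1), ((w n)⁻¹ * A n k) • (X : F[X]) ^ k := by
    intro n
    rw [seqOfMat, Finset.smul_sum]
    simp [smul_smul]
  constructor
  · intro h k
    ext n
    rw [PowerSeries.coeff_smul, colSeries, PowerSeries.coeff_mk, smul_eq_mul]
    rcases lt_or_ge n k with hnk | hnk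
    · rw [coeff_vanish α β hβ hnk, hA.1 n k hnk]
      simp
    · have hc := congrArg (fun p => Polynomial.coeff p k) ((hL n) ▸ h n)
      simp only [coeff_sum_smul, if_pos hnk] at hc
      field_simp [hw n, hw k] at hc ⊢
      linear_combination hc
  · intro h n
    rw [hL n]
    refine Finset.sum_congr rfl fun k _ => ?_
    congr 1
    have hc := congrArg (fun φ => PowerSeries.coeff n φ) (h k)
    simp only [PowerSeries.coeff_smul, colSeries, PowerSeries.coeff_mk, smul_eq_mul] at hc
    field_simp [hw n, hw k] at hc ⊢
    linear_combination hc

/-- `A ∈ L` lies in `R_W` iff the bivariate generating function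
`∑ₙ pₙ(x) yⁿ/wₙ` equals `α(y)·W(xβ(y))` for some `α` of valuation `0` and `β`
of valuation `1`; the equality is stated coefficientwise in `y`, the `yⁿ`
coefficient of `α(y)·W(xβ(y))` being `∑ₖ (coeff_n (α βᵏ)/wₖ) xᵏ`. -/
theorem stmt4 {F : Type*} [Field F] (w : ℕ → F) (hw0 : w 0 = 1)
    (hw : ∀ n, w n ≠ 0) (A : ℕ → ℕ → F) (hA : memL A) :
    IsRiordan w A ↔
      ∃ α β : PowerSeries F,
        PowerSeries.constantCoeff α ≠ 0 ∧
        PowerSeries.coeff 0 β = 0 ∧ PowerSeries.coeff 1 β ≠ 0 ∧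
        ∀ n, (w n)⁻¹ • seqOfMat A n =
          ∑ k ∈ Finset.range (n + 1),
            (PowerSeries.coeff n (α * β ^ k) / w k) • (X : F[X]) ^ k := by
  constructor
  · intro hR
    set α : PowerSeries F := colSeries w A 0 with hαdef
    set β : PowerSeries F := α⁻¹ * (w 1 • colSeries w A 1) with hβdef
    have hα0 : PowerSeries.constantCoeff α ≠ 0 := by
      have : PowerSeries.constantCoeff α = A 0 0 / w 0 := by
        rw [hαdef, colSeries, ← PowerSeries.coeff_zero_eq_constantCoeff_apply,
          PowerSeries.coeff_mk]
      rw [this, hw0, div_one]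
      exact hA.2 0
    have hαinv : α * α⁻¹ = 1 := PowerSeries.mul_inv_cancel α hα0
    have hβ0 : PowerSeries.coeff 0 β = 0 := by
      rw [hβdef, PowerSeries.coeff_zero_eq_constantCoeff_apply, map_mul]
      have h2 : PowerSeries.constantCoeff (w 1 • colSeries w A 1)
          = w 1 * (A 0 1 / w 0) := by
        rw [← PowerSeries.coeff_zero_eq_constantCoeff_apply, PowerSeries.coeff_smul,
          colSeries, PowerSeries.coeff_mk, smul_eq_mul]
      rw [h2, hA.1 0 1 (by omega)]
      simp
    have hαβ1 : α * β = w 1 • colSeries w A 1 := by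
      rw [hβdef, ← mul_assoc, hαinv, one_mul]
    -- the inductive claim
    have P01 : w 0 • colSeries w A 0 = α * β ^ 0 ∧
        w 1 • colSeries w A 1 = α * β ^ 1 := by
      constructor
      · rw [hw0, one_smul, pow_zero, mul_one, hαdef]
      · rw [pow_one, hαβ1]
    have key : ∀ k, (w k • colSeries w A k = α * β ^ k) ∧
        (w (k + 1) • colSeries w A (k + 1) = α * β ^ (k + 1)) := by
      have hαne : α ≠ 0 := fun h => hα0 (by rw [h]; simp)
      have hβne : β ≠ 0 := by
        intro h
        have h1 : PowerSeries.coeff 1 (α * β)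
            = PowerSeries.coeff 1 (w 1 • colSeries w A 1) := by rw [hαβ1]
        rw [h, mul_zero, map_zero, PowerSeries.coeff_smul, colSeries,
          PowerSeries.coeff_mk, smul_eq_mul] at h1
        have : A 1 1 = 0 := by field_simp [hw 1] at h1; exact h1.symm
        exact hA.2 1 this
      intro k
      induction k with
      | zero => exact P01
      | succ k ih =>
        refine ⟨ih.2, ?_⟩
        have hrel := hR (k + 1) (by omega)
        simp only [Nat.add_sub_cancel] at hrel
        have hrel' : (w (k + 1) • colSeries w A (k + 1)) ^ 2 =
            (w k • colSeries w A k) * (w (k + 2) • colSeries w A (k + 2)) := by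
          rw [_root_.smul_pow, smul_mul_smul_comm]
          exact hrel
        rw [ih.1, ih.2] at hrel'
        have hne : α * β ^ k ≠ 0 := mul_ne_zero hαne (pow_ne_zero k hβne)
        have : (α * β ^ k) * (α * β ^ (k + 2)) =
            (α * β ^ k) * (w (k + 2) • colSeries w A (k + 2)) := by
          rw [← hrel']; ring
        exact (mul_left_cancel₀ hne this).symm
    have hβ1 : PowerSeries.coeff 1 β ≠ 0 := by
      intro h
      have h1 : PowerSeries.coeff 1 (α * β)
          = PowerSeries.coeff 1 (w 1 • colSeries w A 1) := by rw [hαβ1]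
      rw [coeff_one_mul'] at h1
      simp only [h, mul_zero, zero_add, PowerSeries.coeff_smul, colSeries,
        PowerSeries.coeff_mk, smul_eq_mul] at h1
      rw [← PowerSeries.coeff_zero_eq_constantCoeff_apply, hβ0, mul_zero] at h1
      have : A 1 1 = 0 := by field_simp [hw 1] at h1; exact h1.symm
      exact hA.2 1 this
    exact ⟨α, β, hα0, hβ0, hβ1,
      (bridge w hw A hA α β hβ0).2 fun k => (key k).1⟩
  · rintro ⟨α, β, hα0, hβ0, hβ1, h⟩
    have hk := (bridge w hw A hA α β hβ0).1 h
    intro k hk1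
    obtain ⟨j, rfl⟩ : ∃ j, k = j + 1 := ⟨k - 1, by omega⟩
    simp only [Nat.add_sub_cancel]
    have : (w (j + 1) • colSeries w A (j + 1)) ^ 2 =
        (w j • colSeries w A j) * (w (j + 2) • colSeries w A (j + 2)) := by
      rw [hk, hk, hk]; ring
    rw [_root_.smul_pow, smul_mul_smul_comm] at this
    exact this
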